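/- Let (Ω, 𝓕, P) be a probability space, q ∈ [0,1), α ∈ (q−1, 0], K ≥ 0, and let I₁, J₁ : (0,∞) → ℝ be measurable with |I₁(z) − z^{q−1}| ≤ K(1 + z^α) and |J₁(z) − (q−1)z^{q−1}| ≤ K(1 + z^α) for all z > 0. Let (H_T)_{T>0} be random variables with H_T > 0 P-a.s., E[H_T] < ∞, E[H_T^q] < ∞, E[H_T^{1+α}] < ∞ for every T, and sup_{T>0} E[H_T] < ∞; let x ∈ ℝ and λ₁(T), λ₂(T) > 0 satisfy E[H_T·I₁(λ₁(T)H_T)] = λ₂(T)^{q−1}·E[H_T^q] = x for every T > 0. Then there exists M ∈ ℝ with M ≤ x, independent of T, such that for every T > 0: |E[H_T·J₁(λ₁(T)H_T)] − (q−1)·λ₂(T)^{q−1}·E[H_T^q]| ≤ K(2 − q)·(E[H_T] + (x − M)^{α/(q−1)}·E[H_T]^{1−α/(q−1)}). -/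

import Mathlib

open MeasureTheory

lemma holder_interp {Ω : Type*} [MeasurableSpace Ω] {P : Measure Ω}
    (f : Ω → ℝ) (hfpos : ∀ᵐ ω ∂P, 0 < f ω)
    (q β : ℝ) (hβpos : 0 < β) (hβ1 : β < 1)
    (hint1 : Integrable f P) (hintq : Integrable (fun ω => f ω ^ q) P) :
    ∫ ω, f ω ^ (q * β + (1 - β)) ∂P ≤
      (∫ ω, f ω ^ q ∂P) ^ β * (∫ ω, f ω ∂P) ^ (1 - β) := by
  have hβ1' : 0 < 1 - β := by linarith
  have hconj : (1 / β).HolderConjugate (1 / (1 - β)) :=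
    Real.holderConjugate_one_div hβpos hβ1' (by ring)
  set f₁ : Ω → ℝ := fun ω => f ω ^ (q * β) with hf₁
  set g₁ : Ω → ℝ := fun ω => f ω ^ (1 - β) with hg₁
  have hf₁nn : 0 ≤ᵐ[P] f₁ := by
    filter_upwards [hfpos] with ω hω
    exact Real.rpow_nonneg hω.le _
  have hg₁nn : 0 ≤ᵐ[P] g₁ := by
    filter_upwards [hfpos] with ω hω
    exact Real.rpow_nonneg hω.le _
  have hf₁mem : MemLp f₁ (ENNReal.ofReal (1 / β)) P := by
    have h1 : MemLp (fun ω => f ω ^ q) 1 P := memLp_one_iff_integrable.2 hintq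
    have h2 := h1.norm_rpow_div (ENNReal.ofReal β)
    have hdiv : (1 : ENNReal) / ENNReal.ofReal β = ENNReal.ofReal (1 / β) := by
      rw [one_div, one_div, ← ENNReal.ofReal_inv_of_pos hβpos]
    rw [hdiv] at h2
    refine h2.ae_eq ?_
    filter_upwards [hfpos] with ω hω
    have hq0 : (0:ℝ) < f ω ^ q := Real.rpow_pos_of_pos hω q
    simp only [hf₁, Real.norm_of_nonneg hq0.le, ENNReal.toReal_ofReal hβpos.le,
      ← Real.rpow_mul hω.le]
  have hg₁mem : MemLp g₁ (ENNReal.ofReal (1 / (1 - β))) P := by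
    have h1 : MemLp f 1 P := memLp_one_iff_integrable.2 hint1
    have h2 := h1.norm_rpow_div (ENNReal.ofReal (1 - β))
    have hdiv : (1 : ENNReal) / ENNReal.ofReal (1 - β) = ENNReal.ofReal (1 / (1 - β)) := by
      rw [one_div, one_div, ← ENNReal.ofReal_inv_of_pos hβ1']
    rw [hdiv] at h2
    refine h2.ae_eq ?_
    filter_upwards [hfpos] with ω hω
    simp only [hg₁, Real.norm_of_nonneg hω.le, ENNReal.toReal_ofReal hβ1'.le]
  have key := integral_mul_le_Lp_mul_Lq_of_nonneg hconj hf₁nn hg₁nn hf₁mem hg₁mem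
  have e1 : ∫ ω, f₁ ω * g₁ ω ∂P = ∫ ω, f ω ^ (q * β + (1 - β)) ∂P := by
    refine integral_congr_ae ?_
    filter_upwards [hfpos] with ω hω
    simp only [hf₁, hg₁, ← Real.rpow_add hω]
  have e2 : ∫ ω, f₁ ω ^ (1 / β) ∂P = ∫ ω, f ω ^ q ∂P := by
    refine integral_congr_ae ?_
    filter_upwards [hfpos] with ω hω
    simp only [hf₁, ← Real.rpow_mul hω.le]
    rw [mul_assoc, mul_one_div_cancel hβpos.ne', mul_one]
  have e3 : ∫ ω, g₁ ω ^ (1 / (1 - β)) ∂P = ∫ ω, f ω ∂P := by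
    refine integral_congr_ae ?_
    filter_upwards [hfpos] with ω hω
    simp only [hg₁, ← Real.rpow_mul hω.le]
    rw [mul_one_div_cancel hβ1'.ne', Real.rpow_one]
  rw [e1, e2, e3] at key
  calc ∫ ω, f ω ^ (q * β + (1 - β)) ∂P
      ≤ (∫ ω, f ω ^ q ∂P) ^ (1 / (1/β)) * (∫ ω, f ω ∂P) ^ (1 / (1/(1-β))) := key
    _ = (∫ ω, f ω ^ q ∂P) ^ β * (∫ ω, f ω ∂P) ^ (1 - β) := by
        rw [one_div_one_div, one_div_one_div]

set_option maxHeartbeats 1000000 in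
/-- Theorem 2.7 (turnpike for myopic portfolios) with the market factor stripped out:
there exists `M ≤ x`, independent of the horizon `T`, such that for all `T > 0`,
`|E[H_T J₁(λ₁(T)H_T)] - (q-1)λ₂(T)^{q-1}E[H_T^q]|
  ≤ K(2-q)(E[H_T] + (x-M)^{α/(q-1)} E[H_T]^{1-α/(q-1)})`. -/
theorem turnpike_myopic_rate
    {Ω : Type*} [MeasurableSpace Ω] (P : Measure Ω) [IsProbabilityMeasure P]
    (q α : ℝ) (hq0 : 0 ≤ q) (hq1 : q < 1) (hα1 : q - 1 < α) (hα2 : α ≤ 0)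
    (K : ℝ) (hK : 0 ≤ K)
    (I₁ J₁ : ℝ → ℝ) (hI₁meas : Measurable I₁) (hJ₁meas : Measurable J₁)
    (hI₁ : ∀ z : ℝ, 0 < z → |I₁ z - z ^ (q - 1)| ≤ K * (1 + z ^ α))
    (hJ₁ : ∀ z : ℝ, 0 < z → |J₁ z - (q - 1) * z ^ (q - 1)| ≤ K * (1 + z ^ α))
    (H : ℝ → Ω → ℝ) (lam₁ lam₂ : ℝ → ℝ) (x : ℝ)
    (hHmeas : ∀ T : ℝ, 0 < T → Measurable (H T))
    (hHpos : ∀ T : ℝ, 0 < T → ∀ᵐ ω ∂P, 0 < H T ω)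
    (hInt1 : ∀ T : ℝ, 0 < T → Integrable (H T) P)
    (hIntq : ∀ T : ℝ, 0 < T → Integrable (fun ω => H T ω ^ q) P)
    (hIntα : ∀ T : ℝ, 0 < T → Integrable (fun ω => H T ω ^ (1 + α)) P)
    (hsup : ∃ Csup : ℝ, ∀ T : ℝ, 0 < T → ∫ ω, H T ω ∂P ≤ Csup)
    (hlam₁ : ∀ T : ℝ, 0 < T → 0 < lam₁ T)
    (hlam₂ : ∀ T : ℝ, 0 < T → 0 < lam₂ T)
    (hbudget₁ : ∀ T : ℝ, 0 < T →
      (∫ ω, H T ω * I₁ (lam₁ T * H T ω) ∂P) = lam₂ T ^ (q - 1) * ∫ ω, H T ω ^ q ∂P)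
    (hbudget₂ : ∀ T : ℝ, 0 < T → lam₂ T ^ (q - 1) * (∫ ω, H T ω ^ q ∂P) = x) :
    ∃ M : ℝ, M ≤ x ∧ ∀ T : ℝ, 0 < T →
      |(∫ ω, H T ω * J₁ (lam₁ T * H T ω) ∂P) -
          (q - 1) * lam₂ T ^ (q - 1) * ∫ ω, H T ω ^ q ∂P| ≤
        K * (2 - q) * ((∫ ω, H T ω ∂P) +
          (x - M) ^ (α / (q - 1)) * (∫ ω, H T ω ∂P) ^ (1 - α / (q - 1))) := by
  obtain ⟨Csup, hCsup⟩ := hsup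
  have hq1' : q - 1 < 0 := by linarith
  set β : ℝ := α / (q - 1) with hβdef
  have hβmul : β * (q - 1) = α := div_mul_cancel₀ α (ne_of_lt hq1')
  have hβ0 : 0 ≤ β := div_nonneg_of_nonpos hα2 hq1'.le
  have hβ1 : β < 1 := by
    by_contra h
    push_neg at h
    have h2 : β * (q - 1) ≤ 1 * (q - 1) := mul_le_mul_of_nonpos_right h hq1'.le
    rw [hβmul, one_mul] at h2
    linarith
  set C : ℝ := max Csup 1 with hCdef
  have hC1 : 1 ≤ C := le_max_right _ _
  set Astar : ℝ := max 1 (max (2 * (x + K * C)) ((2 * K * C) ^ (1 / (1 - β)))) with hAstardef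
  have hAstar1 : 1 ≤ Astar := le_max_left _ _
  refine ⟨x - Astar, by linarith, fun T hT => ?_⟩
  have hcpos : 0 < lam₁ T := hlam₁ T hT
  set c : ℝ := lam₁ T with hcdef
  set f : Ω → ℝ := H T with hfdef
  have hfm : Measurable f := hHmeas T hT
  have hfpos : ∀ᵐ ω ∂P, 0 < f ω := hHpos T hT
  have hfint : Integrable f P := hInt1 T hT
  have hfintq : Integrable (fun ω => f ω ^ q) P := hIntq T hT
  have hfintα : Integrable (fun ω => f ω ^ (1 + α)) P := hIntα T hT
  set E : ℝ := ∫ ω, f ω ∂P with hEdef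
  set Q : ℝ := ∫ ω, f ω ^ q ∂P with hQdef
  set Iα : ℝ := ∫ ω, f ω ^ (1 + α) ∂P with hIαdef
  have hE0 : 0 ≤ E :=
    integral_nonneg_of_ae (by filter_upwards [hfpos] with ω h; exact h.le)
  have hQ0 : 0 ≤ Q :=
    integral_nonneg_of_ae
      (by filter_upwards [hfpos] with ω h; exact (Real.rpow_pos_of_pos h q).le)
  have hEC : E ≤ C := le_trans (hCsup T hT) (le_max_left _ _)
  -- pointwise identities
  have hid : ∀ᵐ ω ∂P, f ω * (c * f ω) ^ (q - 1) = c ^ (q - 1) * f ω ^ q ∧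
      f ω * (c * f ω) ^ α = c ^ α * f ω ^ (1 + α) := by
    filter_upwards [hfpos] with ω hω
    have key : ∀ r : ℝ, f ω * f ω ^ r = f ω ^ (1 + r) := fun r => by
      rw [Real.rpow_add hω, Real.rpow_one]
    constructor
    · rw [Real.mul_rpow hcpos.le hω.le, mul_left_comm, key]
      norm_num
    · rw [Real.mul_rpow hcpos.le hω.le, mul_left_comm, key]
  -- integrability of the two main integrands
  have hmeasJ : AEStronglyMeasurable (fun ω => f ω * J₁ (c * f ω)) P :=
    (hfm.mul (hJ₁meas.comp (hfm.const_mul c))).aestronglyMeasurable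
  have hmeasI : AEStronglyMeasurable (fun ω => f ω * I₁ (c * f ω)) P :=
    (hfm.mul (hI₁meas.comp (hfm.const_mul c))).aestronglyMeasurable
  have hboundint : Integrable (fun ω =>
      (1 - q) * c ^ (q - 1) * f ω ^ q + (K * f ω + K * c ^ α * f ω ^ (1 + α))) P :=
    (hfintq.const_mul _).add ((hfint.const_mul K).add (hfintα.const_mul _))
  have hgJ_int : Integrable (fun ω => f ω * J₁ (c * f ω)) P := by
    refine hboundint.mono' hmeasJ ?_
    filter_upwards [hfpos, hid] with ω hω hidω
    have hz : 0 < c * f ω := mul_pos hcpos hω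
    have hJb := hJ₁ _ hz
    have hzp : 0 < (c * f ω) ^ (q - 1) := Real.rpow_pos_of_pos hz _
    have habsJ : |J₁ (c * f ω)| ≤ (1 - q) * (c * f ω) ^ (q - 1) + K * (1 + (c * f ω) ^ α) := by
      have h := abs_add_le (J₁ (c * f ω) - (q - 1) * (c * f ω) ^ (q - 1))
        ((q - 1) * (c * f ω) ^ (q - 1))
      rw [sub_add_cancel] at h
      have h2 : |(q - 1) * (c * f ω) ^ (q - 1)| = (1 - q) * (c * f ω) ^ (q - 1) := by
        rw [abs_mul, abs_of_nonpos hq1'.le, abs_of_pos hzp]; ring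
      linarith
    have h3 : ‖f ω * J₁ (c * f ω)‖ = f ω * |J₁ (c * f ω)| := by
      rw [Real.norm_eq_abs, abs_mul, abs_of_pos hω]
    rw [h3]
    calc f ω * |J₁ (c * f ω)|
        ≤ f ω * ((1 - q) * (c * f ω) ^ (q - 1) + K * (1 + (c * f ω) ^ α)) :=
          mul_le_mul_of_nonneg_left habsJ hω.le
      _ = (1 - q) * (f ω * (c * f ω) ^ (q - 1)) + (K * f ω + K * (f ω * (c * f ω) ^ α)) := by
          ring
      _ = (1 - q) * c ^ (q - 1) * f ω ^ q + (K * f ω + K * c ^ α * f ω ^ (1 + α)) := by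
          rw [hidω.1, hidω.2]; ring
  have hboundintI : Integrable (fun ω =>
      1 * c ^ (q - 1) * f ω ^ q + (K * f ω + K * c ^ α * f ω ^ (1 + α))) P :=
    (hfintq.const_mul _).add ((hfint.const_mul K).add (hfintα.const_mul _))
  have hgI_int : Integrable (fun ω => f ω * I₁ (c * f ω)) P := by
    refine hboundintI.mono' hmeasI ?_
    filter_upwards [hfpos, hid] with ω hω hidω
    have hz : 0 < c * f ω := mul_pos hcpos hω
    have hIb := hI₁ _ hz
    have hzp : 0 < (c * f ω) ^ (q - 1) := Real.rpow_pos_of_pos hz _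
    have habsI : |I₁ (c * f ω)| ≤ (c * f ω) ^ (q - 1) + K * (1 + (c * f ω) ^ α) := by
      have h := abs_add_le (I₁ (c * f ω) - (c * f ω) ^ (q - 1)) ((c * f ω) ^ (q - 1))
      rw [sub_add_cancel] at h
      have h2 : |(c * f ω) ^ (q - 1)| = (c * f ω) ^ (q - 1) := abs_of_pos hzp
      linarith
    have h3 : ‖f ω * I₁ (c * f ω)‖ = f ω * |I₁ (c * f ω)| := by
      rw [Real.norm_eq_abs, abs_mul, abs_of_pos hω]
    rw [h3]
    calc f ω * |I₁ (c * f ω)|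
        ≤ f ω * ((c * f ω) ^ (q - 1) + K * (1 + (c * f ω) ^ α)) :=
          mul_le_mul_of_nonneg_left habsI hω.le
      _ = 1 * (f ω * (c * f ω) ^ (q - 1)) + (K * f ω + K * (f ω * (c * f ω) ^ α)) := by ring
      _ = 1 * c ^ (q - 1) * f ω ^ q + (K * f ω + K * c ^ α * f ω ^ (1 + α)) := by
          rw [hidω.1, hidω.2]; ring
  have hx : ∫ ω, f ω * I₁ (c * f ω) ∂P = x := (hbudget₁ T hT).trans (hbudget₂ T hT)
  -- the main error bound
  have hD : ∫ ω, f ω * J₁ (c * f ω) ∂P - (q - 1) * x =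
      ∫ ω, (f ω * J₁ (c * f ω) - (q - 1) * (f ω * I₁ (c * f ω))) ∂P := by
    rw [integral_sub hgJ_int (hgI_int.const_mul _), integral_const_mul, hx]
  have habs : |∫ ω, f ω * J₁ (c * f ω) ∂P - (q - 1) * x| ≤
      K * (2 - q) * E + K * (2 - q) * (c ^ α * Iα) := by
    rw [hD]
    have hptw : ∀ᵐ ω ∂P, ‖f ω * J₁ (c * f ω) - (q - 1) * (f ω * I₁ (c * f ω))‖ ≤
        K * (2 - q) * f ω + K * (2 - q) * c ^ α * f ω ^ (1 + α) := by
      filter_upwards [hfpos, hid] with ω hω hidω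
      have hz : 0 < c * f ω := mul_pos hcpos hω
      have hJb := hJ₁ _ hz
      have hIb := hI₁ _ hz
      have hEq : f ω * J₁ (c * f ω) - (q - 1) * (f ω * I₁ (c * f ω)) =
          f ω * (J₁ (c * f ω) - (q - 1) * (c * f ω) ^ (q - 1)) -
          (q - 1) * (f ω * (I₁ (c * f ω) - (c * f ω) ^ (q - 1))) := by ring
      rw [Real.norm_eq_abs, hEq]
      have hb1 : |f ω * (J₁ (c * f ω) - (q - 1) * (c * f ω) ^ (q - 1))| ≤
          f ω * (K * (1 + (c * f ω) ^ α)) := by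
        rw [abs_mul, abs_of_pos hω]
        exact mul_le_mul_of_nonneg_left hJb hω.le
      have hb2 : |(q - 1) * (f ω * (I₁ (c * f ω) - (c * f ω) ^ (q - 1)))| ≤
          (1 - q) * (f ω * (K * (1 + (c * f ω) ^ α))) := by
        rw [abs_mul, abs_mul, abs_of_pos hω, abs_of_nonpos hq1'.le]
        have : |I₁ (c * f ω) - (c * f ω) ^ (q - 1)| ≤ K * (1 + (c * f ω) ^ α) := hIb
        have h4 : f ω * |I₁ (c * f ω) - (c * f ω) ^ (q - 1)| ≤
            f ω * (K * (1 + (c * f ω) ^ α)) := mul_le_mul_of_nonneg_left this hω.le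
        nlinarith [abs_nonneg (I₁ (c * f ω) - (c * f ω) ^ (q - 1)), hω.le]
      have htri := abs_sub (f ω * (J₁ (c * f ω) - (q - 1) * (c * f ω) ^ (q - 1)))
        ((q - 1) * (f ω * (I₁ (c * f ω) - (c * f ω) ^ (q - 1))))
      have hfin : f ω * (K * (1 + (c * f ω) ^ α)) +
          (1 - q) * (f ω * (K * (1 + (c * f ω) ^ α))) =
          K * (2 - q) * f ω + K * (2 - q) * c ^ α * f ω ^ (1 + α) := by
        have h5 : f ω * (K * (1 + (c * f ω) ^ α)) =
            K * f ω + K * (f ω * (c * f ω) ^ α) := by ring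
        rw [h5, hidω.2]; ring
      linarith
    calc |∫ ω, (f ω * J₁ (c * f ω) - (q - 1) * (f ω * I₁ (c * f ω))) ∂P|
        ≤ ∫ ω, ‖f ω * J₁ (c * f ω) - (q - 1) * (f ω * I₁ (c * f ω))‖ ∂P := by
          exact (Real.norm_eq_abs _ ▸ norm_integral_le_integral_norm _)
      _ ≤ ∫ ω, (K * (2 - q) * f ω + K * (2 - q) * c ^ α * f ω ^ (1 + α)) ∂P := by
          refine integral_mono_ae ((hgJ_int.sub (hgI_int.const_mul _)).norm)
            ((hfint.const_mul _).add (hfintα.const_mul _)) hptw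
      _ = K * (2 - q) * E + K * (2 - q) * (c ^ α * Iα) := by
          rw [integral_add (hfint.const_mul _) (hfintα.const_mul _), integral_const_mul,
            integral_const_mul]
          ring
  -- Hölder interpolation
  have hHold : Iα ≤ Q ^ β * E ^ (1 - β) := by
    rcases eq_or_lt_of_le hβ0 with h0 | hβpos
    · have hα0 : α = 0 := by rw [← hβmul, ← h0]; ring
      have : Iα = E := by
        rw [hIαdef, hEdef]
        refine integral_congr_ae (ae_of_all P fun ω => ?_)
        simp only [hα0, add_zero, Real.rpow_one]
      rw [this, ← h0, Real.rpow_zero, one_mul, sub_zero, Real.rpow_one]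
    · have h := holder_interp f hfpos q β hβpos hβ1 hfint hfintq
      have hexp : q * β + (1 - β) = 1 + α := by
        rw [← hβmul]; ring
      rw [hexp] at h
      exact h
  set A : ℝ := c ^ (q - 1) * Q with hAdef
  have hA0 : 0 ≤ A := mul_nonneg (Real.rpow_pos_of_pos hcpos _).le hQ0
  have hAβ0 : 0 ≤ A ^ β := Real.rpow_nonneg hA0 _
  have hcα : c ^ α * Iα ≤ A ^ β * E ^ (1 - β) := by
    have h1 : c ^ α = (c ^ (q - 1)) ^ β := by
      rw [← Real.rpow_mul hcpos.le, mul_comm, hβmul]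
    have h2 : A ^ β = (c ^ (q - 1)) ^ β * Q ^ β :=
      Real.mul_rpow (Real.rpow_pos_of_pos hcpos _).le hQ0
    calc c ^ α * Iα ≤ c ^ α * (Q ^ β * E ^ (1 - β)) :=
          mul_le_mul_of_nonneg_left hHold (Real.rpow_pos_of_pos hcpos _).le
      _ = A ^ β * E ^ (1 - β) := by rw [h1, h2]; ring
  -- lower bound for x gives upper bound for A
  have hxl : A - K * E - K * (c ^ α * Iα) ≤ x := by
    have hA1 : Integrable (fun ω => c ^ (q - 1) * f ω ^ q - K * f ω) P :=
      (hfintq.const_mul _).sub (hfint.const_mul K)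
    have hA2 : Integrable (fun ω => K * (c ^ α * f ω ^ (1 + α))) P := by
      exact (hfintα.const_mul _).const_mul K
    have hint_sub : Integrable
        (fun ω => c ^ (q - 1) * f ω ^ q - K * f ω - K * (c ^ α * f ω ^ (1 + α))) P := by
      exact hA1.sub hA2
    have hptwI : ∀ᵐ ω ∂P,
        c ^ (q - 1) * f ω ^ q - K * f ω - K * (c ^ α * f ω ^ (1 + α)) ≤
        f ω * I₁ (c * f ω) := by
      filter_upwards [hfpos, hid] with ω hω hidω
      have hz : 0 < c * f ω := mul_pos hcpos hω
      have hIb := hI₁ _ hz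
      have h1 : (c * f ω) ^ (q - 1) - K * (1 + (c * f ω) ^ α) ≤ I₁ (c * f ω) := by
        have := abs_le.1 hIb
        linarith [this.1]
      have h2 : f ω * ((c * f ω) ^ (q - 1) - K * (1 + (c * f ω) ^ α)) ≤
          f ω * I₁ (c * f ω) := mul_le_mul_of_nonneg_left h1 hω.le
      have h3 : f ω * ((c * f ω) ^ (q - 1) - K * (1 + (c * f ω) ^ α)) =
          f ω * (c * f ω) ^ (q - 1) - K * f ω - K * (f ω * (c * f ω) ^ α) := by ring
      rw [h3, hidω.1, hidω.2] at h2
      linarith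
    have hmono := integral_mono_ae hint_sub hgI_int hptwI
    have e1 := integral_sub hA1 hA2
    have e2 := integral_sub (hfintq.const_mul (c ^ (q - 1))) (hfint.const_mul K)
    have hval : ∫ ω, (c ^ (q - 1) * f ω ^ q - K * f ω - K * (c ^ α * f ω ^ (1 + α))) ∂P =
        A - K * E - K * (c ^ α * Iα) := by
      rw [e1, e2, integral_const_mul, integral_const_mul, integral_const_mul,
        integral_const_mul, ← hQdef, ← hEdef, ← hIαdef, hAdef]
    rw [← hx]
    calc A - K * E - K * (c ^ α * Iα)
        = ∫ ω, (c ^ (q - 1) * f ω ^ q - K * f ω - K * (c ^ α * f ω ^ (1 + α))) ∂P :=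
          hval.symm
      _ ≤ ∫ ω, f ω * I₁ (c * f ω) ∂P := hmono
  have hE1β : E ^ (1 - β) ≤ C := by
    rcases le_total E 1 with h | h
    · calc E ^ (1 - β) ≤ 1 ^ (1 - β) := Real.rpow_le_rpow hE0 h (by linarith)
        _ = 1 := Real.one_rpow _
        _ ≤ C := hC1
    · calc E ^ (1 - β) ≤ E ^ (1 : ℝ) :=
          Real.rpow_le_rpow_of_exponent_le h (by linarith)
        _ = E := Real.rpow_one E
        _ ≤ C := hEC
  have hAx : A ≤ x + K * C + K * C * A ^ β := by
    have h1 : c ^ α * Iα ≤ A ^ β * C :=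
      le_trans hcα (mul_le_mul_of_nonneg_left hE1β hAβ0)
    have h2 : K * E ≤ K * C := mul_le_mul_of_nonneg_left hEC hK
    have h3 : K * (c ^ α * Iα) ≤ K * (A ^ β * C) := mul_le_mul_of_nonneg_left h1 hK
    nlinarith [hxl]
  have hAle : A ≤ Astar := by
    by_contra hcon
    push_neg at hcon
    have h1 : 1 < A := lt_of_le_of_lt hAstar1 hcon
    have hApos : (0:ℝ) < A := by linarith
    have h2 : 2 * (x + K * C) < A :=
      lt_of_le_of_lt (le_trans (le_max_left _ _) (le_max_right 1 _)) hcon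
    have h3 : (2 * K * C) ^ (1 / (1 - β)) < A :=
      lt_of_le_of_lt (le_trans (le_max_right _ _) (le_max_right 1 _)) hcon
    have hKC0 : 0 ≤ 2 * K * C := by positivity
    have h4 : 2 * K * C < A ^ (1 - β) := by
      rcases eq_or_lt_of_le hKC0 with h0 | hpos
      · rw [← h0]; exact Real.rpow_pos_of_pos hApos _
      · have h5 : ((2 * K * C) ^ (1 / (1 - β))) ^ (1 - β) < A ^ (1 - β) :=
          Real.rpow_lt_rpow (Real.rpow_nonneg hKC0 _) h3 (by linarith)
        rwa [← Real.rpow_mul hKC0, one_div_mul_cancel (by linarith : (1:ℝ) - β ≠ 0),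
          Real.rpow_one] at h5
    have h5 : A ^ (1 - β) * A ^ β = A := by
      rw [← Real.rpow_add hApos]
      norm_num
    have h6 : 2 * K * C * A ^ β ≤ A ^ (1 - β) * A ^ β :=
      mul_le_mul_of_nonneg_right h4.le hAβ0
    rw [h5] at h6
    linarith [hAx]
  -- conclusion
  have hxsub : x - (x - Astar) = Astar := by ring
  rw [mul_assoc (q - 1), hbudget₂ T hT, hxsub]
  have hAβ : A ^ β ≤ Astar ^ β := Real.rpow_le_rpow hA0 hAle hβ0
  have hK2q : 0 ≤ K * (2 - q) := mul_nonneg hK (by linarith)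
  have hE1β0 : 0 ≤ E ^ (1 - β) := Real.rpow_nonneg hE0 _
  have hfinal : K * (2 - q) * (c ^ α * Iα) ≤ K * (2 - q) * (Astar ^ β * E ^ (1 - β)) := by
    refine mul_le_mul_of_nonneg_left ?_ hK2q
    exact le_trans hcα (mul_le_mul_of_nonneg_right hAβ hE1β0)
  calc |∫ ω, f ω * J₁ (c * f ω) ∂P - (q - 1) * x|
      ≤ K * (2 - q) * E + K * (2 - q) * (c ^ α * Iα) := habs
    _ ≤ K * (2 - q) * E + K * (2 - q) * (Astar ^ β * E ^ (1 - β)) := by linarith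
    _ = K * (2 - q) * (E + Astar ^ β * E ^ (1 - β)) := by ring
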